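/- Fix α > -1. The polynomials L̃ₙ^α(x) = (e^{-x} x^α / n!) dⁿ/dxⁿ (e^x x^{n-α}) (for x > 0) satisfy the three-term recurrence (n+1) L̃_{n+1} + (α - 1 - x - 2n) L̃ₙ + (n - α) L̃_{n-1} = 0 for n ≥ 1, with L̃₀ = 1 and L̃₋₁ = 0. -/

import Mathlib

open Finset

noncomputable def dd (c : ℝ) (m : ℕ) : ℝ := ∏ i ∈ Finset.range m, (c - i)

lemma dd_zero (c : ℝ) : dd c 0 = 1 := by simp [dd]
lemma dd_succ (c : ℝ) (m : ℕ) : dd c (m+1) = dd c m * (c - m) := by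
  simp [dd, Finset.prod_range_succ]
lemma dd_shift (c : ℝ) (m : ℕ) : dd (c+1) (m+1) = (c+1) * dd c m := by
  rw [dd, Finset.prod_range_succ']
  simp [dd, mul_comm]

lemma sumLemma (c : ℝ) : ∀ (n : ℕ) (x : ℝ), 0 < x →
    iteratedDeriv n (fun y => Real.exp y * y ^ c) x
      = ∑ j ∈ Finset.range (n+1), (n.choose j : ℝ) * dd c j * (Real.exp x * x ^ (c - j)) := by
  intro n
  induction n with
  | zero => intro x hx; simp [iteratedDeriv_zero, dd]
  | succ n ih =>
    intro x hx
    rw [iteratedDeriv_succ]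
    have hev : (iteratedDeriv n (fun y => Real.exp y * y ^ c))
        =ᶠ[nhds x] (fun y => ∑ j ∈ Finset.range (n+1),
          (n.choose j:ℝ) * dd c j * (Real.exp y * y ^ (c - j))) := by
      filter_upwards [Ioi_mem_nhds hx] with y hy using ih y hy
    rw [hev.deriv_eq]
    have hder : HasDerivAt (fun y => ∑ j ∈ Finset.range (n+1),
          (n.choose j:ℝ) * dd c j * (Real.exp y * y ^ (c - j)))
        (∑ j ∈ Finset.range (n+1), (n.choose j:ℝ) * dd c j *
          (Real.exp x * x ^ (c - j) + Real.exp x * ((c - j) * x ^ (c - j - 1)))) x := by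
      apply HasDerivAt.fun_sum
      intro j _
      exact ((Real.hasDerivAt_exp x).mul
        (Real.hasDerivAt_rpow_const (Or.inl hx.ne'))).const_mul _
    rw [hder.deriv]
    have expand : ∀ j : ℕ, (n.choose j:ℝ) * dd c j *
          (Real.exp x * x ^ (c - j) + Real.exp x * ((c - j) * x ^ (c - j - 1)))
        = (n.choose j:ℝ) * dd c j * (Real.exp x * x ^ (c - (j:ℝ)))
          + (n.choose j:ℝ) * dd c (j+1) * (Real.exp x * x ^ (c - ((j:ℝ)+1))) := by
      intro j
      rw [dd_succ, sub_sub]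
      ring
    rw [Finset.sum_congr rfl (fun j _ => expand j), Finset.sum_add_distrib]
    rw [Finset.sum_range_succ'
      (fun j => (((n+1).choose j : ℕ) : ℝ) * dd c j * (Real.exp x * x ^ (c - j))) (n+1)]
    have hsplit : ∀ k : ℕ, (((n+1).choose (k+1) : ℕ):ℝ) * dd c (k+1) * (Real.exp x * x ^ (c - ((k+1:ℕ):ℝ)))
        = (n.choose k : ℝ) * dd c (k+1) * (Real.exp x * x ^ (c - ((k:ℝ)+1)))
          + ((n.choose (k+1) : ℕ):ℝ) * dd c (k+1) * (Real.exp x * x ^ (c - ((k+1:ℕ):ℝ))) := by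
      intro k
      rw [Nat.choose_succ_succ']
      push_cast
      ring
    rw [Finset.sum_congr rfl (fun k _ => hsplit k), Finset.sum_add_distrib]
    have ha : ∑ k ∈ Finset.range (n+1), ((n.choose k : ℕ):ℝ) * dd c k * (Real.exp x * x ^ (c - (k:ℝ)))
        = (∑ k ∈ Finset.range (n+1), ((n.choose (k+1) : ℕ):ℝ) * dd c (k+1) * (Real.exp x * x ^ (c - ((k+1:ℕ):ℝ))))
          + (((n+1).choose 0 : ℕ):ℝ) * dd c 0 * (Real.exp x * x ^ (c - ((0:ℕ):ℝ))) := by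
      have h0 : (((n+1).choose 0 : ℕ):ℝ) * dd c 0 * (Real.exp x * x ^ (c - ((0:ℕ):ℝ)))
          = ((n.choose 0 : ℕ):ℝ) * dd c 0 * (Real.exp x * x ^ (c - ((0:ℕ):ℝ))) := by
        norm_num
      rw [h0, ← Finset.sum_range_succ'
        (fun k => ((n.choose k : ℕ):ℝ) * dd c k * (Real.exp x * x ^ (c - (k:ℝ)))) (n+1),
        Finset.sum_range_succ, Finset.sum_range_succ]
      simp [Nat.choose_succ_self]
      rw [Finset.sum_range_succ]
      simp
    rw [ha]
    ring

lemma coefId (α : ℝ) (m j : ℕ) :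
    (((m+2).choose (j+2) : ℕ):ℝ) * dd ((m:ℝ)+2-α) (j+2)
    + (α - 3 - 2*m) * ((((m+1).choose (j+1) : ℕ):ℝ) * dd ((m:ℝ)+1-α) (j+1))
    - (((m+1).choose (j+2) : ℕ):ℝ) * dd ((m:ℝ)+1-α) (j+2)
    + ((m:ℝ)+1)*((m:ℝ)+1-α) * (((m.choose j : ℕ):ℝ) * dd ((m:ℝ)-α) j) = 0 := by
  have s2 : dd ((m:ℝ)+1-α) (j+1) = ((m:ℝ)+1-α) * dd ((m:ℝ)-α) j := by
    have h := dd_shift ((m:ℝ)-α) j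
    rw [show (m:ℝ)-α+1 = (m:ℝ)+1-α by ring] at h
    exact h
  have s1 : dd ((m:ℝ)+2-α) (j+2) = ((m:ℝ)+2-α) * (((m:ℝ)+1-α) * dd ((m:ℝ)-α) j) := by
    have h := dd_shift ((m:ℝ)+1-α) (j+1)
    rw [show (m:ℝ)+1-α+1 = (m:ℝ)+2-α by ring] at h
    rw [h, s2]
  have s3 : dd ((m:ℝ)+1-α) (j+2) = ((m:ℝ)+1-α) * (dd ((m:ℝ)-α) j * ((m:ℝ)-α-j)) := by
    have h := dd_shift ((m:ℝ)-α) (j+1)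
    rw [show (m:ℝ)-α+1 = (m:ℝ)+1-α by ring] at h
    rw [h, dd_succ]
  have P1 : (((m+2).choose (j+2) : ℕ):ℝ)
      = (((m+1).choose (j+1) : ℕ):ℝ) + (((m+1).choose (j+2) : ℕ):ℝ) := by
    rw [Nat.choose_succ_succ']
    push_cast; ring
  have P2 : (((m+1).choose (j+1) : ℕ):ℝ) = ((m.choose j : ℕ):ℝ) + ((m.choose (j+1) : ℕ):ℝ) := by
    rw [Nat.choose_succ_succ']
    push_cast; ring
  have P3 : ((j:ℝ)+2) * (((m+1).choose (j+2) : ℕ):ℝ) = ((m:ℝ)+1) * ((m.choose (j+1) : ℕ):ℝ) := by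
    have h := Nat.add_one_mul_choose_eq m (j+1)
    have : ((m+1) * m.choose (j+1) : ℕ) = ((m+1).choose (j+2) * (j+2) : ℕ) := by
      simpa [Nat.succ_eq_add_one] using h
    have h2 := congrArg (Nat.cast : ℕ → ℝ) this
    push_cast at h2
    linarith
  rw [s1, s2, s3, P1, P2]
  linear_combination ((m:ℝ)+1-α) * dd ((m:ℝ)-α) j * P3

lemma dd_one (c : ℝ) : dd c 1 = c := by simp [dd]

lemma sid (α : ℝ) (m : ℕ) (x : ℝ) :
    (∑ j ∈ Finset.range (m+3), (((m+2).choose j:ℕ):ℝ) * dd ((m:ℝ)+2-α) j * x ^ (m+2-j))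
    + (α - 3 - 2*m) * (∑ j ∈ Finset.range (m+2), (((m+1).choose j:ℕ):ℝ) * dd ((m:ℝ)+1-α) j * x ^ (m+1-j))
    - x * (∑ j ∈ Finset.range (m+2), (((m+1).choose j:ℕ):ℝ) * dd ((m:ℝ)+1-α) j * x ^ (m+1-j))
    + ((m:ℝ)+1)*((m:ℝ)+1-α) * (∑ j ∈ Finset.range (m+1), ((m.choose j:ℕ):ℝ) * dd ((m:ℝ)-α) j * x ^ (m-j)) = 0 := by
  have hexp2 : ∀ j : ℕ, m + 2 - (j + 1 + 1) = m - j := fun j => by omega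
  have hexp1 : ∀ j : ℕ, m + 1 - (j + 1) = m - j := fun j => by omega
  have hSg1 : ∑ j ∈ Finset.range (m+3), (((m+2).choose j:ℕ):ℝ) * dd ((m:ℝ)+2-α) j * x ^ (m+2-j)
      = (∑ j ∈ Finset.range (m+1), (((m+2).choose (j+2):ℕ):ℝ) * dd ((m:ℝ)+2-α) (j+2) * x ^ (m-j))
        + (((m+2).choose 1:ℕ):ℝ) * dd ((m:ℝ)+2-α) 1 * x ^ (m+1)
        + (((m+2).choose 0:ℕ):ℝ) * dd ((m:ℝ)+2-α) 0 * x ^ (m+2) := by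
    rw [Finset.sum_range_succ'
      (fun j => (((m+2).choose j:ℕ):ℝ) * dd ((m:ℝ)+2-α) j * x ^ (m+2-j)) (m+2)]
    rw [Finset.sum_range_succ'
      (fun j => (((m+2).choose (j+1):ℕ):ℝ) * dd ((m:ℝ)+2-α) (j+1) * x ^ (m+2-(j+1))) (m+1)]
    simp only [hexp2, hexp1]
    norm_num
  have hSg2 : ∑ j ∈ Finset.range (m+2), (((m+1).choose j:ℕ):ℝ) * dd ((m:ℝ)+1-α) j * x ^ (m+1-j)
      = (∑ j ∈ Finset.range (m+1), (((m+1).choose (j+1):ℕ):ℝ) * dd ((m:ℝ)+1-α) (j+1) * x ^ (m-j))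
        + (((m+1).choose 0:ℕ):ℝ) * dd ((m:ℝ)+1-α) 0 * x ^ (m+1) := by
    rw [Finset.sum_range_succ'
      (fun j => (((m+1).choose j:ℕ):ℝ) * dd ((m:ℝ)+1-α) j * x ^ (m+1-j)) (m+1)]
    simp only [hexp1]
    norm_num
  have hSg3 : x * (∑ j ∈ Finset.range (m+2), (((m+1).choose j:ℕ):ℝ) * dd ((m:ℝ)+1-α) j * x ^ (m+1-j))
      = (∑ j ∈ Finset.range (m+1), (((m+1).choose (j+2):ℕ):ℝ) * dd ((m:ℝ)+1-α) (j+2) * x ^ (m-j))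
        + (((m+1).choose 1:ℕ):ℝ) * dd ((m:ℝ)+1-α) 1 * x ^ (m+1)
        + (((m+1).choose 0:ℕ):ℝ) * dd ((m:ℝ)+1-α) 0 * x ^ (m+2) := by
    rw [Finset.mul_sum]
    have hterm : ∀ j ∈ Finset.range (m+2),
        x * ((((m+1).choose j:ℕ):ℝ) * dd ((m:ℝ)+1-α) j * x ^ (m+1-j))
        = (((m+1).choose j:ℕ):ℝ) * dd ((m:ℝ)+1-α) j * x ^ (m+2-j) := by
      intro j hj
      have hj' : j ≤ m + 1 := by
        have := Finset.mem_range.mp hj; omega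
      have : m + 2 - j = (m + 1 - j) + 1 := by omega
      rw [this, pow_succ]
      ring
    rw [Finset.sum_congr rfl hterm]
    rw [Finset.sum_range_succ'
      (fun j => (((m+1).choose j:ℕ):ℝ) * dd ((m:ℝ)+1-α) j * x ^ (m+2-j)) (m+1)]
    rw [Finset.sum_range_succ'
      (fun j => (((m+1).choose (j+1):ℕ):ℝ) * dd ((m:ℝ)+1-α) (j+1) * x ^ (m+2-(j+1))) m]
    simp only [hexp2, hexp1]
    rw [Finset.sum_range_succ
      (fun j => (((m+1).choose (j+2):ℕ):ℝ) * dd ((m:ℝ)+1-α) (j+2) * x ^ (m-j)) m]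
    have hz : ((m+1).choose (m+2) : ℕ) = 0 := Nat.choose_eq_zero_of_lt (by omega)
    rw [hz]
    norm_num
  have hcomb : (∑ j ∈ Finset.range (m+1), (((m+2).choose (j+2):ℕ):ℝ) * dd ((m:ℝ)+2-α) (j+2) * x ^ (m-j))
      + (α - 3 - 2*m) * (∑ j ∈ Finset.range (m+1), (((m+1).choose (j+1):ℕ):ℝ) * dd ((m:ℝ)+1-α) (j+1) * x ^ (m-j))
      - (∑ j ∈ Finset.range (m+1), (((m+1).choose (j+2):ℕ):ℝ) * dd ((m:ℝ)+1-α) (j+2) * x ^ (m-j))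
      + ((m:ℝ)+1)*((m:ℝ)+1-α) * (∑ j ∈ Finset.range (m+1), ((m.choose j:ℕ):ℝ) * dd ((m:ℝ)-α) j * x ^ (m-j)) = 0 := by
    rw [Finset.mul_sum, Finset.mul_sum, ← Finset.sum_add_distrib, ← Finset.sum_sub_distrib,
      ← Finset.sum_add_distrib]
    apply Finset.sum_eq_zero
    intro j _
    linear_combination x ^ (m-j) * coefId α m j
  rw [hSg1, hSg3, hSg2]
  simp only [dd_zero, dd_one, Nat.choose_zero_right, Nat.choose_one_right]
  push_cast
  linear_combination hcomb

lemma lval (α : ℝ) (n : ℕ) (x : ℝ) (hx : 0 < x) :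
    Real.exp (-x) * x ^ α / (n.factorial : ℝ) *
      iteratedDeriv n (fun y => Real.exp y * y ^ ((n : ℝ) - α)) x
    = (∑ j ∈ Finset.range (n+1), ((n.choose j : ℕ):ℝ) * dd ((n:ℝ) - α) j * x ^ (n - j))
        / (n.factorial : ℝ) := by
  rw [sumLemma ((n:ℝ) - α) n x hx, Finset.mul_sum, Finset.sum_div]
  apply Finset.sum_congr rfl
  intro j hj
  have hj' : j ≤ n := by have := Finset.mem_range.mp hj; omega
  have h1 : x ^ α * x ^ (((n:ℝ) - α) - (j:ℝ)) = x ^ ((n - j : ℕ)) := by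
    rw [← Real.rpow_natCast x (n - j), ← Real.rpow_add hx]
    congr 1
    rw [Nat.cast_sub hj']
    ring
  have h2 : Real.exp (-x) * Real.exp x = 1 := by
    rw [← Real.exp_add]; simp
  rw [← h1, div_mul_eq_mul_div]
  congr 1
  linear_combination ((n.choose j : ℕ):ℝ) * dd ((n:ℝ)-α) j
    * (x ^ α * x ^ (((n:ℝ) - α) - (j:ℝ))) * h2

theorem stmt11 (α : ℝ) (hα : -1 < α) (L : ℕ → ℝ → ℝ)
    (hL : ∀ n x, L n x = Real.exp (-x) * x ^ α / (n.factorial : ℝ) *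
      iteratedDeriv n (fun y => Real.exp y * y ^ ((n : ℝ) - α)) x) :
    (∀ x : ℝ, 0 < x → L 0 x = 1) ∧
    ∀ n : ℕ, 1 ≤ n → ∀ x : ℝ, 0 < x →
      ((n : ℝ) + 1) * L (n + 1) x + (α - 1 - x - 2 * n) * L n x
        + ((n : ℝ) - α) * L (n - 1) x = 0 := by
  constructor
  · intro x hx
    rw [hL 0 x, lval α 0 x hx]
    simp [dd_zero]
  · intro n hn x hx
    obtain ⟨m, rfl⟩ : ∃ m, n = m + 1 := ⟨n - 1, by omega⟩
    have h2 : m + 1 + 1 = m + 2 := rfl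
    have h3 : m + 1 - 1 = m := rfl
    rw [h3, hL (m+1+1) x, hL (m+1) x, hL m x, h2,
      lval α (m+2) x hx, lval α (m+1) x hx, lval α m x hx]
    push_cast
    rw [show m+2+1 = m+3 from rfl, show m+1+1 = m+2 from rfl]
    have key := sid α m x
    have f1 : ((m+2).factorial : ℝ) = ((m:ℝ)+2) * ((m+1).factorial : ℝ) := by
      rw [show m+2 = (m+1)+1 from rfl, Nat.factorial_succ]
      push_cast; ring
    have f2 : ((m+1).factorial : ℝ) = ((m:ℝ)+1) * (m.factorial : ℝ) := by
      rw [Nat.factorial_succ]; push_cast; ring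
    have fz : (m.factorial : ℝ) ≠ 0 := Nat.cast_ne_zero.mpr m.factorial_ne_zero
    rw [f1, f2]
    have hm2 : ((m:ℝ)+2) ≠ 0 := by positivity
    have hm1 : ((m:ℝ)+1) ≠ 0 := by positivity
    field_simp
    linear_combination ((m:ℝ)+2) * key
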